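/- For all positive integers d and r, the complex dimension of the linear span of the CPTP maps from M_d(ℂ) to M_r(ℂ) (equivalently, of the operator system S(d,r)) equals d²r² − d² + 1. -/

import Mathlib

open scoped Kronecker ComplexOrder Matrix

noncomputable section

/-- Apply a map `φ` between matrix algebras blockwise to a block matrix. -/
def mapBlocks {m A B : Type*} (φ : Matrix A A ℂ → Matrix B B ℂ)
    (M : Matrix (m × A) (m × A) ℂ) : Matrix (m × B) (m × B) ℂ :=
  Matrix.of fun p q => φ (Matrix.of fun a b => M (p.1, a) (q.1, b)) p.2 q.2

/-- Complete positivity: every blockwise application preserves positive semidefiniteness. -/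
def IsCP {A B : Type*} [Fintype A] [Fintype B] (φ : Matrix A A ℂ → Matrix B B ℂ) : Prop :=
  ∀ (n : ℕ) (M : Matrix (Fin n × A) (Fin n × A) ℂ), M.PosSemidef → (mapBlocks φ M).PosSemidef

/-- CPTP: completely positive and trace preserving. -/
def IsCPTP {A B : Type*} [Fintype A] [Fintype B] (φ : Matrix A A ℂ →ₗ[ℂ] Matrix B B ℂ) : Prop :=
  IsCP ⇑φ ∧ ∀ X, (φ X).trace = X.trace

/-- The Choi matrix of a linear map, `C_φ = Σ_{ij} E_{ij} ⊗ φ(E_{ij})`. -/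
def choi {d r : ℕ} (φ : Matrix (Fin d) (Fin d) ℂ →ₗ[ℂ] Matrix (Fin r) (Fin r) ℂ) :
    Matrix (Fin d × Fin r) (Fin d × Fin r) ℂ :=
  Matrix.of fun p q => φ (Matrix.single p.1 q.1 1) p.2 q.2

/-- The trace of the `(i,j)` block of a block matrix. -/
def btr {d r : ℕ} (C : Matrix (Fin d × Fin r) (Fin d × Fin r) ℂ) (i j : Fin d) : ℂ :=
  ∑ k : Fin r, C (i, k) (j, k)

lemma btr_add {d r : ℕ} (C D : Matrix (Fin d × Fin r) (Fin d × Fin r) ℂ) (i j : Fin d) :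
    btr (C + D) i j = btr C i j + btr D i j := by
  simp [btr, Finset.sum_add_distrib]

lemma btr_smul {d r : ℕ} (c : ℂ) (C : Matrix (Fin d × Fin r) (Fin d × Fin r) ℂ) (i j : Fin d) :
    btr (c • C) i j = c * btr C i j := by
  simp [btr, Finset.mul_sum]

/-- The operator system `S(d,r)`: block matrices whose diagonal blocks all have
the same trace and whose off-diagonal blocks have trace zero. -/
def Sset (d r : ℕ) : Set (Matrix (Fin d × Fin r) (Fin d × Fin r) ℂ) :=
  {C | (∀ i j : Fin d, btr C i i = btr C j j) ∧ ∀ i j : Fin d, i ≠ j → btr C i j = 0}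

/-- `S(d,r)` as a subspace. -/
def Ssub (d r : ℕ) : Submodule ℂ (Matrix (Fin d × Fin r) (Fin d × Fin r) ℂ) where
  carrier := Sset d r
  add_mem' := by
    rintro C D ⟨hC1, hC2⟩ ⟨hD1, hD2⟩
    refine ⟨fun i j => ?_, fun i j hij => ?_⟩
    · rw [btr_add, btr_add, hC1 i j, hD1 i j]
    · rw [btr_add, hC2 i j hij, hD2 i j hij, add_zero]
  zero_mem' := by
    refine ⟨fun i j => ?_, fun i j _ => ?_⟩ <;> simp [btr]
  smul_mem' := by
    rintro c C ⟨hC1, hC2⟩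
    refine ⟨fun i j => ?_, fun i j hij => ?_⟩
    · rw [btr_smul, btr_smul, hC1 i j]
    · rw [btr_smul, hC2 i j hij, mul_zero]

/-- The partial trace over the second factor. -/
def ptrace {d r : ℕ} (C : Matrix (Fin d × Fin r) (Fin d × Fin r) ℂ) : Matrix (Fin d) (Fin d) ℂ :=
  Matrix.of fun i j => btr C i j

section Aux

variable {d r : ℕ}

/-- The map associated to a Choi matrix. -/
def choiInv (C : Matrix (Fin d × Fin r) (Fin d × Fin r) ℂ) :
    Matrix (Fin d) (Fin d) ℂ →ₗ[ℂ] Matrix (Fin r) (Fin r) ℂ where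
  toFun X := Matrix.of fun k l => ∑ a, ∑ b, X a b * C (a, k) (b, l)
  map_add' X Y := by
    ext k l
    simp [add_mul, Finset.sum_add_distrib]
  map_smul' c X := by
    ext k l
    simp [Finset.mul_sum, mul_assoc]

lemma choi_choiInv (C : Matrix (Fin d × Fin r) (Fin d × Fin r) ℂ) :
    choi (choiInv C) = C := by
  ext ⟨p1, p2⟩ ⟨q1, q2⟩
  simp only [choi, choiInv, Matrix.of_apply, LinearMap.coe_mk, AddHom.coe_mk]
  rw [Finset.sum_eq_single p1 (fun a _ ha => Finset.sum_eq_zero fun b _ => by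
    simp [Matrix.single, Ne.symm ha]) (by simp)]
  rw [Finset.sum_eq_single q1 (fun b _ hb => by
    simp [Matrix.single, Ne.symm hb]) (by simp)]
  simp [Matrix.single]

lemma choiInv_choi (ψ : Matrix (Fin d) (Fin d) ℂ →ₗ[ℂ] Matrix (Fin r) (Fin r) ℂ) :
    choiInv (choi ψ) = ψ := by
  apply LinearMap.ext
  intro X
  ext k l
  have hX := Matrix.matrix_eq_sum_single X
  show (∑ a, ∑ b, X a b * choi ψ (a, k) (b, l)) = ψ X k l
  conv_rhs => rw [hX]
  rw [map_sum, Matrix.sum_apply]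
  refine Finset.sum_congr rfl fun a _ => ?_
  rw [map_sum, Matrix.sum_apply]
  refine Finset.sum_congr rfl fun b _ => ?_
  have hsb : Matrix.single a b (X a b) = X a b • Matrix.single a b (1 : ℂ) := by
    rw [Matrix.smul_single, smul_eq_mul, mul_one]
  rw [hsb, map_smul]
  simp [choi]

/-- `choi` as a linear map. -/
def choiLM (d r : ℕ) :
    (Matrix (Fin d) (Fin d) ℂ →ₗ[ℂ] Matrix (Fin r) (Fin r) ℂ) →ₗ[ℂ]
      Matrix (Fin d × Fin r) (Fin d × Fin r) ℂ where
  toFun ψ := choi ψ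
  map_add' ψ φ := by ext ⟨p1, p2⟩ ⟨q1, q2⟩; simp [choi]
  map_smul' c ψ := by ext ⟨p1, p2⟩ ⟨q1, q2⟩; simp [choi]

/-- `choiInv` as a linear map. -/
def choiInvLM (d r : ℕ) :
    Matrix (Fin d × Fin r) (Fin d × Fin r) ℂ →ₗ[ℂ]
      (Matrix (Fin d) (Fin d) ℂ →ₗ[ℂ] Matrix (Fin r) (Fin r) ℂ) where
  toFun C := choiInv C
  map_add' C D := by
    apply LinearMap.ext; intro X; ext k l
    simp [choiInv, mul_add, Finset.sum_add_distrib]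
  map_smul' c C := by
    apply LinearMap.ext; intro X; ext k l
    simp only [choiInv, LinearMap.coe_mk, AddHom.coe_mk, Matrix.of_apply, RingHom.id_apply,
      LinearMap.smul_apply, Matrix.smul_apply, smul_eq_mul, Matrix.smul_apply, Finset.mul_sum]
    refine Finset.sum_congr rfl fun a _ => Finset.sum_congr rfl fun b _ => by ring

/-- The Choi linear equivalence. -/
def choiEquiv (d r : ℕ) :
    (Matrix (Fin d) (Fin d) ℂ →ₗ[ℂ] Matrix (Fin r) (Fin r) ℂ) ≃ₗ[ℂ]
      Matrix (Fin d × Fin r) (Fin d × Fin r) ℂ :=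
  LinearEquiv.ofLinear (choiLM d r) (choiInvLM d r)
    (by apply LinearMap.ext; intro C; exact choi_choiInv C)
    (by apply LinearMap.ext; intro ψ; exact choiInv_choi ψ)

/-- Choi's theorem, one direction: PSD Choi matrix gives a CP map. -/
lemma isCP_choiInv {C : Matrix (Fin d × Fin r) (Fin d × Fin r) ℂ} (hC : C.PosSemidef) :
    IsCP ⇑(choiInv C) := by
  intro n M hM
  obtain ⟨A, hA⟩ : ∃ A : Matrix (Fin n × Fin d) (Fin n × Fin d) ℂ, M = Aᴴ * A := by
    open scoped MatrixOrder in exact CStarAlgebra.nonneg_iff_eq_star_mul_self.mp hM.nonneg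
  obtain ⟨B, hB⟩ : ∃ B : Matrix (Fin d × Fin r) (Fin d × Fin r) ℂ, C = Bᴴ * B := by
    open scoped MatrixOrder in exact CStarAlgebra.nonneg_iff_eq_star_mul_self.mp hC.nonneg
  set D : Matrix ((Fin n × Fin d) × (Fin d × Fin r)) (Fin n × Fin r) ℂ :=
    Matrix.of fun st ql => ∑ b, A st.1 (ql.1, b) * B st.2 (b, ql.2) with hD
  have key : mapBlocks (⇑(choiInv C)) M = Dᴴ * D := by
    ext ⟨p, k⟩ ⟨q, l⟩
    have hMe : ∀ p a q b, M (p, a) (q, b) = ∑ s, star (A s (p, a)) * A s (q, b) := by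
      intro p a q b
      rw [hA]
      simp [Matrix.mul_apply, Matrix.conjTranspose_apply]
    have hCe : ∀ a k b l, C (a, k) (b, l) = ∑ t, star (B t (a, k)) * B t (b, l) := by
      intro a k b l
      rw [hB]
      simp [Matrix.mul_apply, Matrix.conjTranspose_apply]
    have hRHS : (Dᴴ * D) (p, k) (q, l) =
        ∑ s, ∑ t, (∑ a, star (A s (p, a)) * star (B t (a, k))) *
          (∑ b, A s (q, b) * B t (b, l)) := by
      rw [Matrix.mul_apply, Fintype.sum_prod_type]
      refine Finset.sum_congr rfl fun s _ => Finset.sum_congr rfl fun t _ => ?_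
      rw [Matrix.conjTranspose_apply]
      congr 1
      show star (D (s, t) (p, k)) = _
      rw [hD]
      simp [star_sum, star_mul', mul_comm]
    have hLHS : mapBlocks (⇑(choiInv C)) M (p, k) (q, l) =
        ∑ a, ∑ b, M (p, a) (q, b) * C (a, k) (b, l) := rfl
    rw [hLHS, hRHS]
    calc ∑ a, ∑ b, M (p, a) (q, b) * C (a, k) (b, l)
        = ∑ a, ∑ b, ∑ s, ∑ t,
            (star (A s (p, a)) * A s (q, b)) *
              (star (B t (a, k)) * B t (b, l)) := by
          refine Finset.sum_congr rfl fun a _ => Finset.sum_congr rfl fun b _ => ?_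
          rw [hMe, hCe, Finset.sum_mul]
          refine Finset.sum_congr rfl fun s _ => ?_
          rw [Finset.mul_sum]
      _ = ∑ a, ∑ s, ∑ b, ∑ t,
            (star (A s (p, a)) * A s (q, b)) *
              (star (B t (a, k)) * B t (b, l)) :=
          Finset.sum_congr rfl fun a _ => Finset.sum_comm
      _ = ∑ s, ∑ a, ∑ b, ∑ t,
            (star (A s (p, a)) * A s (q, b)) *
              (star (B t (a, k)) * B t (b, l)) := Finset.sum_comm
      _ = ∑ s, ∑ a, ∑ t, ∑ b,
            (star (A s (p, a)) * A s (q, b)) *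
              (star (B t (a, k)) * B t (b, l)) :=
          Finset.sum_congr rfl fun s _ => Finset.sum_congr rfl fun a _ => Finset.sum_comm
      _ = ∑ s, ∑ t, ∑ a, ∑ b,
            (star (A s (p, a)) * A s (q, b)) *
              (star (B t (a, k)) * B t (b, l)) :=
          Finset.sum_congr rfl fun s _ => Finset.sum_comm
      _ = _ := by
          refine Finset.sum_congr rfl fun s _ => Finset.sum_congr rfl fun t _ => ?_
          rw [Finset.sum_mul]
          refine Finset.sum_congr rfl fun a _ => ?_
          rw [Finset.mul_sum]
          refine Finset.sum_congr rfl fun b _ => ?_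
          ring
  rw [key]
  exact Matrix.posSemidef_conjTranspose_mul_self D

lemma btr_one (i j : Fin d) :
    btr (1 : Matrix (Fin d × Fin r) (Fin d × Fin r) ℂ) i j = if i = j then (r : ℂ) else 0 := by
  simp only [btr, Matrix.one_apply, Prod.mk.injEq]
  by_cases h : i = j <;> simp [h]

lemma btr_conjTranspose (C : Matrix (Fin d × Fin r) (Fin d × Fin r) ℂ) (i j : Fin d) :
    btr Cᴴ i j = (starRingEnd ℂ) (btr C j i) := by
  simp [btr, Matrix.conjTranspose_apply, map_sum]

lemma btr_sub (C D : Matrix (Fin d × Fin r) (Fin d × Fin r) ℂ) (i j : Fin d) :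
    btr (C - D) i j = btr C i j - btr D i j := by
  simp [btr, Finset.sum_sub_distrib]

/-- trace of `choiInv C X` in terms of block traces. -/
lemma trace_choiInv (C : Matrix (Fin d × Fin r) (Fin d × Fin r) ℂ)
    (X : Matrix (Fin d) (Fin d) ℂ) :
    (choiInv C X).trace = ∑ a, ∑ b, X a b * btr C a b := by
  simp only [Matrix.trace, Matrix.diag, choiInv, LinearMap.coe_mk, AddHom.coe_mk,
    Matrix.of_apply, btr, Finset.mul_sum]
  rw [Finset.sum_comm]
  refine Finset.sum_congr rfl fun a _ => ?_
  rw [Finset.sum_comm]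

/-- If `C` is PSD with identity partial trace, it is the Choi matrix of a CPTP map. -/
lemma mem_choi_image {C : Matrix (Fin d × Fin r) (Fin d × Fin r) ℂ} (hC : C.PosSemidef)
    (hbtr : ∀ i j, btr C i j = if i = j then 1 else 0) :
    C ∈ choi ''
      {ψ : Matrix (Fin d) (Fin d) ℂ →ₗ[ℂ] Matrix (Fin r) (Fin r) ℂ | IsCPTP ψ} := by
  refine ⟨choiInv C, ⟨isCP_choiInv hC, fun X => ?_⟩, choi_choiInv C⟩
  rw [trace_choiInv]
  simp only [hbtr, mul_ite, mul_one, mul_zero]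
  simp [Matrix.trace, Matrix.diag]

/-- a nonnegative real multiple of a PSD matrix is PSD. -/
lemma psd_real_smul {m : Type*} [Fintype m] {M : Matrix m m ℂ} (hM : M.PosSemidef)
    {c : ℝ} (hc : 0 ≤ c) : ((c : ℂ) • M).PosSemidef := by
  rw [Matrix.posSemidef_iff_dotProduct_mulVec]
  constructor
  · unfold Matrix.IsHermitian
    rw [Matrix.conjTranspose_smul, hM.1.eq]
    congr 1
    simp
  · intro x
    rw [Matrix.smul_mulVec, dotProduct_smul, smul_eq_mul]
    have h2 := (Matrix.posSemidef_iff_dotProduct_mulVec.mp hM).2 x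
    rw [Complex.le_def] at h2 ⊢
    simp only [Complex.zero_re, Complex.zero_im] at h2 ⊢
    constructor
    · simp only [Complex.mul_re, Complex.ofReal_re, Complex.ofReal_im]
      nlinarith [h2.1, h2.2]
    · simp only [Complex.mul_im, Complex.ofReal_re, Complex.ofReal_im]
      nlinarith [h2.1, h2.2]

/-- Hermitian matrices can be shifted to be PSD. -/
lemma exists_shift_psd {m : Type*} [Fintype m] [DecidableEq m] {X : Matrix m m ℂ}
    (hX : X.IsHermitian) : ∃ s : ℝ, 0 ≤ s ∧ (X + (s : ℂ) • 1).PosSemidef := by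
  refine ⟨∑ i, |hX.eigenvalues i|, Finset.sum_nonneg fun i _ => abs_nonneg _, ?_⟩
  set s : ℝ := ∑ i, |hX.eigenvalues i| with hs
  set U : Matrix m m ℂ := (Matrix.IsHermitian.eigenvectorUnitary hX : Matrix m m ℂ) with hU
  have hUU : U * star U = 1 :=
    (Matrix.mem_unitaryGroup_iff).mp (Matrix.IsHermitian.eigenvectorUnitary hX).2
  have key : X + (s : ℂ) • 1 =
      U * Matrix.diagonal (fun i => ((hX.eigenvalues i + s : ℝ) : ℂ)) * star U := by
    have hdiag : Matrix.diagonal (fun i => ((hX.eigenvalues i + s : ℝ) : ℂ)) =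
        Matrix.diagonal (RCLike.ofReal ∘ hX.eigenvalues) + (s : ℂ) • 1 := by
      ext i j
      rcases eq_or_ne i j with h | h
      · subst h
        simp only [Matrix.diagonal_apply_eq, Matrix.add_apply, Matrix.smul_apply,
          Matrix.one_apply_eq, Function.comp_apply, smul_eq_mul, mul_one]
        push_cast
        rfl
      · simp [Matrix.diagonal_apply_ne _ h, Matrix.one_apply_ne h]
    rw [hdiag, Matrix.mul_add, Matrix.add_mul]
    congr 1
    · rw [hU]
      exact hX.spectral_theorem
    · rw [Matrix.mul_smul, Matrix.smul_mul, mul_one, hUU]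
  rw [key]
  refine Matrix.PosSemidef.mul_mul_conjTranspose_same ?_ U
  refine Matrix.posSemidef_diagonal_iff.mpr fun i => ?_
  rw [Complex.le_def]
  constructor
  · simp only [Complex.zero_re, Complex.ofReal_re]
    have : |hX.eigenvalues i| ≤ s := by
      rw [hs]
      exact Finset.single_le_sum (f := fun i => |hX.eigenvalues i|)
        (fun j _ => abs_nonneg _) (Finset.mem_univ i)
    have h2 := abs_le.mp this
    linarith [h2.1]
  · simp

/-- Hermitian elements of `Ssub` lie in the span of Choi matrices of CPTP maps. -/
lemma herm_mem_span (hr : 0 < r) {X : Matrix (Fin d × Fin r) (Fin d × Fin r) ℂ}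
    (hXH : X.IsHermitian) (hX : X ∈ Ssub d r) :
    X ∈ Submodule.span ℂ (choi ''
      {ψ : Matrix (Fin d) (Fin d) ℂ →ₗ[ℂ] Matrix (Fin r) (Fin r) ℂ | IsCPTP ψ}) := by
  obtain ⟨h1, h2⟩ := hX
  obtain ⟨s₀, hs₀, hpsd₀⟩ := exists_shift_psd hXH
  rcases Nat.eq_zero_or_pos d with hd0 | hd
  · -- d = 0 : X = 0
    have : X = 0 := by
      subst hd0
      ext ⟨i, _⟩ _
      exact absurd i.2 (by simp)
    rw [this]; exact Submodule.zero_mem _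
  -- the common diagonal block trace
  set i0 : Fin d := ⟨0, hd⟩
  set t : ℂ := btr X i0 i0 with ht
  have htreal : (starRingEnd ℂ) t = t := by
    rw [ht, btr, map_sum]
    refine Finset.sum_congr rfl fun k _ => ?_
    have := congrFun (congrFun hXH.eq (i0, k)) (i0, k)
    rw [Matrix.conjTranspose_apply] at this
    exact this
  set τ : ℝ := t.re with hτ
  have htτ : t = (τ : ℂ) := (Complex.conj_eq_iff_re.mp htreal).symm
  set s : ℝ := s₀ + |τ| + 1 with hsdef
  have hs : 0 ≤ s := by positivity
  have hpsd : (X + (s : ℂ) • 1).PosSemidef := by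
    have h1' : X + (s : ℂ) • 1 = (X + (s₀ : ℂ) • 1) + ((|τ| + 1 : ℝ) : ℂ) • 1 := by
      have hc : ((s : ℝ) : ℂ) = ((s₀ : ℝ) : ℂ) + ((|τ| + 1 : ℝ) : ℂ) := by
        rw [hsdef]; push_cast; ring
      rw [hc, add_smul, add_assoc]
    rw [h1']
    exact hpsd₀.add (psd_real_smul Matrix.PosSemidef.one (by positivity))
  set u : ℝ := τ + s * r with hu
  have hupos : 0 < u := by
    have hr1 : (1 : ℝ) ≤ (r : ℝ) := by exact_mod_cast hr
    have : s ≤ s * r := le_mul_of_one_le_right hs hr1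
    have habs := abs_le.mp (le_refl |τ|)
    rw [hu, hsdef]
    nlinarith [abs_nonneg τ, neg_abs_le τ, hs₀]
  have hune : (u : ℂ) ≠ 0 := by exact_mod_cast ne_of_gt hupos
  -- the two CPTP Choi matrices
  set C₁ : Matrix (Fin d × Fin r) (Fin d × Fin r) ℂ := ((u⁻¹ : ℝ) : ℂ) • (X + (s : ℂ) • 1)
    with hC₁
  set C₂ : Matrix (Fin d × Fin r) (Fin d × Fin r) ℂ := (((r : ℝ)⁻¹ : ℝ) : ℂ) • 1 with hC₂
  have hbtr1 : ∀ i j, btr C₁ i j = if i = j then 1 else 0 := by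
    intro i j
    rw [hC₁, btr_smul, btr_add, btr_smul, btr_one]
    by_cases hij : i = j
    · subst hij
      rw [h1 i i0, ← ht, htτ]
      simp only [if_pos rfl, if_true]
      have hcast : ((u⁻¹ : ℝ) : ℂ) * ((τ : ℂ) + (s : ℂ) * ((r : ℕ) : ℂ)) =
          ((u⁻¹ * (τ + s * (r : ℝ)) : ℝ) : ℂ) := by push_cast; ring
      rw [hcast, ← hu, inv_mul_cancel₀ hupos.ne', Complex.ofReal_one]
    · rw [h2 i j hij]
      simp [hij]
  have hbtr2 : ∀ i j, btr C₂ i j = if i = j then 1 else 0 := by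
    intro i j
    rw [hC₂, btr_smul, btr_one]
    by_cases hij : i = j
    · simp only [if_pos hij, if_true]
      have hrne : (r : ℝ) ≠ 0 := by positivity
      have hcast : (((r : ℝ)⁻¹ : ℝ) : ℂ) * ((r : ℕ) : ℂ) =
          (((r : ℝ)⁻¹ * (r : ℝ) : ℝ) : ℂ) := by push_cast; ring
      rw [hcast, inv_mul_cancel₀ hrne, Complex.ofReal_one]
    · simp [hij]
  have hC₁psd : C₁.PosSemidef := by
    rw [hC₁]; exact psd_real_smul hpsd (by positivity)
  have hC₂psd : C₂.PosSemidef := by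
    have hone : (1 : Matrix (Fin d × Fin r) (Fin d × Fin r) ℂ).PosSemidef :=
      Matrix.PosSemidef.one
    have h1psd : ((((r : ℝ)⁻¹ : ℝ) : ℂ) •
        (1 : Matrix (Fin d × Fin r) (Fin d × Fin r) ℂ)).PosSemidef :=
      psd_real_smul (c := ((r : ℝ))⁻¹) hone (by positivity)
    rw [hC₂]
    exact h1psd
  have hmem1 := Submodule.subset_span (R := ℂ) (mem_choi_image hC₁psd hbtr1)
  have hmem2 := Submodule.subset_span (R := ℂ) (mem_choi_image hC₂psd hbtr2)
  have e1 : (u : ℂ) • C₁ = X + (s : ℂ) • 1 := by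
    rw [hC₁, smul_smul, ← Complex.ofReal_mul, mul_inv_cancel₀ hupos.ne',
      Complex.ofReal_one, one_smul]
  have e2 : ((s * (r : ℝ) : ℝ) : ℂ) • C₂ = (s : ℂ) • 1 := by
    have hrne : (r : ℝ) ≠ 0 := by positivity
    rw [hC₂, smul_smul, ← Complex.ofReal_mul,
      show (s * (r : ℝ)) * ((r : ℝ))⁻¹ = s by field_simp]
  have hkey : X = (u : ℂ) • C₁ - ((s * (r : ℝ) : ℝ) : ℂ) • C₂ := by
    rw [e1, e2, add_sub_cancel_right]
  rw [hkey]
  exact Submodule.sub_mem _ (Submodule.smul_mem _ _ hmem1) (Submodule.smul_mem _ _ hmem2)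

/-- The span of Choi matrices of CPTP maps is `Ssub`. -/
lemma span_choi_eq (hd : 0 < d) (hr : 0 < r) :
    Submodule.span ℂ (choi ''
      {ψ : Matrix (Fin d) (Fin d) ℂ →ₗ[ℂ] Matrix (Fin r) (Fin r) ℂ | IsCPTP ψ}) =
      Ssub d r := by
  apply le_antisymm
  · rw [Submodule.span_le]
    rintro C ⟨ψ, hψ, rfl⟩
    have hbtr : ∀ i j, btr (choi ψ) i j = if i = j then 1 else 0 := by
      intro i j
      have := hψ.2 (Matrix.single i j 1)
      have htrs : (Matrix.single i j (1 : ℂ)).trace = if i = j then 1 else 0 := by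
        by_cases h : i = j
        · subst h; simp [Matrix.trace, Matrix.diag, Matrix.single]
        · rw [if_neg h, Matrix.trace]
          apply Finset.sum_eq_zero
          intro k _
          simp only [Matrix.diag, Matrix.single, Matrix.of_apply]
          rw [if_neg]
          rintro ⟨rfl, rfl⟩
          exact h rfl
      rw [htrs] at this
      rw [btr]
      calc ∑ k, choi ψ (i, k) (j, k) = (ψ (Matrix.single i j 1)).trace := by
            simp [choi, Matrix.trace, Matrix.diag]
        _ = _ := by rw [this]
    refine ⟨fun i j => ?_, fun i j hij => ?_⟩
    · rw [hbtr i i, hbtr j j]; simp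
    · rw [hbtr i j]; simp [hij]
  · intro C hC
    -- decompose into Hermitian parts
    set X : Matrix (Fin d × Fin r) (Fin d × Fin r) ℂ := ((2 : ℂ))⁻¹ • (C + Cᴴ) with hXdef
    set Y : Matrix (Fin d × Fin r) (Fin d × Fin r) ℂ :=
      (-(Complex.I) * (2 : ℂ)⁻¹) • (C - Cᴴ) with hYdef
    have hCH : Cᴴ ∈ Ssub d r := by
      obtain ⟨h1, h2⟩ := hC
      refine ⟨fun i j => ?_, fun i j hij => ?_⟩
      · rw [btr_conjTranspose, btr_conjTranspose, h1 i j]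
      · rw [btr_conjTranspose, h2 j i (Ne.symm hij), map_zero]
    have hXS : X ∈ Ssub d r := Submodule.smul_mem (Ssub d r) _
      (Submodule.add_mem (Ssub d r) hC hCH)
    have hYS : Y ∈ Ssub d r := Submodule.smul_mem (Ssub d r) _
      (Submodule.sub_mem (Ssub d r) hC hCH)
    have hXH : X.IsHermitian := by
      unfold Matrix.IsHermitian
      rw [hXdef, Matrix.conjTranspose_smul, Matrix.conjTranspose_add,
        Matrix.conjTranspose_conjTranspose, add_comm Cᴴ C]
      congr 1
      simp [Complex.ext_iff]
    have hYH : Y.IsHermitian := by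
      unfold Matrix.IsHermitian
      rw [hYdef, Matrix.conjTranspose_smul, Matrix.conjTranspose_sub,
        Matrix.conjTranspose_conjTranspose, ← neg_sub C Cᴴ, smul_neg, ← neg_smul]
      congr 1
      simp [Complex.ext_iff]
    have hCXY : C = X + Complex.I • Y := by
      rw [hXdef, hYdef, smul_smul]
      have hco : Complex.I * (-Complex.I * (2 : ℂ)⁻¹) = (2 : ℂ)⁻¹ := by
        rw [← mul_assoc, mul_neg, Complex.I_mul_I, neg_neg, one_mul]
      rw [hco, ← smul_add]
      have hsum : C + Cᴴ + (C - Cᴴ) = (2 : ℂ) • C := by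
        rw [two_smul]; abel
      rw [hsum, smul_smul, inv_mul_cancel₀ (two_ne_zero), one_smul]
    rw [hCXY]
    exact Submodule.add_mem _ (herm_mem_span hr hXH hXS)
      (Submodule.smul_mem _ _ (herm_mem_span hr hYH hYS))

/-- The dimension of `Ssub`. -/
lemma finrank_Ssub (hd : 0 < d) (hr : 0 < r) :
    Module.finrank ℂ (Ssub d r) = d ^ 2 * r ^ 2 - d ^ 2 + 1 := by
  set i0 : Fin d := ⟨0, hd⟩
  set k0 : Fin r := ⟨0, hr⟩
  -- the map whose kernel is Ssub
  set L : Matrix (Fin d × Fin r) (Fin d × Fin r) ℂ →ₗ[ℂ] Matrix (Fin d) (Fin d) ℂ :=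
    { toFun := fun C => Matrix.of fun i j =>
        btr C i j - (if i = j then btr C i0 i0 else 0)
      map_add' := fun C D => by
        ext i j
        simp only [Matrix.of_apply, btr_add, Matrix.add_apply]
        by_cases h : i = j <;> simp [h] <;> ring
      map_smul' := fun c C => by
        ext i j
        simp only [Matrix.of_apply, btr_smul, RingHom.id_apply, Matrix.smul_apply, smul_eq_mul]
        by_cases h : i = j <;> simp [h] <;> ring } with hL
  have hker : LinearMap.ker L = Ssub d r := by
    apply le_antisymm
    · intro C hC
      rw [LinearMap.mem_ker] at hC
      have hentry : ∀ i j, btr C i j = if i = j then btr C i0 i0 else 0 := by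
        intro i j
        have := congrFun (congrFun hC i) j
        simp only [hL, LinearMap.coe_mk, AddHom.coe_mk, Matrix.of_apply,
          Matrix.zero_apply] at this
        linear_combination this
      refine ⟨fun i j => ?_, fun i j hij => ?_⟩
      · rw [hentry i i, hentry j j]; simp
      · rw [hentry i j]; simp [hij]
    · rintro C ⟨h1, h2⟩
      rw [LinearMap.mem_ker]
      ext i j
      simp only [hL, LinearMap.coe_mk, AddHom.coe_mk, Matrix.of_apply, Matrix.zero_apply]
      by_cases h : i = j
      · subst h; rw [h1 i i0]; simp
      · rw [h2 i j h]; simp [h]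
  -- evaluation functional on M_d
  set ev : Matrix (Fin d) (Fin d) ℂ →ₗ[ℂ] ℂ :=
    { toFun := fun X => X i0 i0
      map_add' := fun X Y => rfl
      map_smul' := fun c X => rfl } with hev
  have hrange : LinearMap.range L = LinearMap.ker ev := by
    apply le_antisymm
    · rintro X ⟨C, rfl⟩
      rw [LinearMap.mem_ker]
      show (Matrix.of fun i j => btr C i j - if i = j then btr C i0 i0 else 0) i0 i0 = 0
      simp
    · intro X hX
      rw [LinearMap.mem_ker] at hX
      change X i0 i0 = 0 at hX
      refine ⟨Matrix.of fun p q =>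
        if p.2 = k0 ∧ q.2 = k0 then X p.1 q.1 else 0, ?_⟩
      have hbtrC : ∀ i j, btr (Matrix.of fun p q =>
          if p.2 = k0 ∧ q.2 = k0 then X p.1 q.1 else (0:ℂ)) i j = X i j := by
        intro i j
        rw [btr]
        rw [Finset.sum_eq_single k0]
        · simp
        · intro k _ hk; simp [hk]
        · simp
      ext i j
      simp only [hL, LinearMap.coe_mk, AddHom.coe_mk, Matrix.of_apply]
      rw [hbtrC, hbtrC, hX]
      by_cases h : i = j <;> simp [h]
  have hev_surj : LinearMap.range ev = ⊤ := by
    rw [LinearMap.range_eq_top]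
    intro c
    exact ⟨Matrix.of fun _ _ => c, rfl⟩
  have hd2 : Module.finrank ℂ (Matrix (Fin d) (Fin d) ℂ) = d * d := by
    rw [Module.finrank_matrix]
    simp
  have hdr2 : Module.finrank ℂ (Matrix (Fin d × Fin r) (Fin d × Fin r) ℂ)
      = (d * r) * (d * r) := by
    rw [Module.finrank_matrix]
    simp
  have hrn1 := LinearMap.finrank_range_add_finrank_ker ev
  rw [hev_surj, hd2] at hrn1
  have hftop : Module.finrank ℂ (⊤ : Submodule ℂ ℂ) = 1 := by
    rw [finrank_top]; exact Module.finrank_self ℂ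
  rw [hftop] at hrn1
  have hrn2 := LinearMap.finrank_range_add_finrank_ker L
  rw [hrange, hker, hdr2] at hrn2
  -- hrn1 : 1 + finrank (ker ev) = d * d
  -- hrn2 : finrank (ker ev) + finrank (Ssub d r) = (d*r)*(d*r)
  have hdd : 1 ≤ d * d := Nat.one_le_iff_ne_zero.mpr (by positivity)
  have hprod : (d * r) * (d * r) = (d * d) * (r * r) := by ring
  have hrr : 1 ≤ r * r := Nat.one_le_iff_ne_zero.mpr (by positivity)
  have hge : d * d ≤ (d * d) * (r * r) := Nat.le_mul_of_pos_right _ (by positivity)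
  rw [hprod] at hrn2
  simp only [pow_two]
  omega

end Aux

set_option maxHeartbeats 1000000

/-- the complex dimension of the span of CPTP maps `M_d → M_r`
equals `d²r² − d² + 1`. -/
theorem finrank_span_CPTP (d r : ℕ) (hd : 0 < d) (hr : 0 < r) :
    Module.finrank ℂ
      (Submodule.span ℂ
        {ψ : Matrix (Fin d) (Fin d) ℂ →ₗ[ℂ] Matrix (Fin r) (Fin r) ℂ | IsCPTP ψ}) =
      d ^ 2 * r ^ 2 - d ^ 2 + 1 := by
  rw [← LinearEquiv.finrank_map_eq (choiEquiv d r)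
    (Submodule.span ℂ {ψ : Matrix (Fin d) (Fin d) ℂ →ₗ[ℂ] Matrix (Fin r) (Fin r) ℂ | IsCPTP ψ}),
    Submodule.map_span]
  have himg : (⇑((choiEquiv d r :
      (Matrix (Fin d) (Fin d) ℂ →ₗ[ℂ] Matrix (Fin r) (Fin r) ℂ) ≃ₗ[ℂ]
        Matrix (Fin d × Fin r) (Fin d × Fin r) ℂ) :
      (Matrix (Fin d) (Fin d) ℂ →ₗ[ℂ] Matrix (Fin r) (Fin r) ℂ) →ₗ[ℂ]
        Matrix (Fin d × Fin r) (Fin d × Fin r) ℂ)) ''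
      {ψ : Matrix (Fin d) (Fin d) ℂ →ₗ[ℂ] Matrix (Fin r) (Fin r) ℂ | IsCPTP ψ} =
      choi '' {ψ : Matrix (Fin d) (Fin d) ℂ →ₗ[ℂ] Matrix (Fin r) (Fin r) ℂ | IsCPTP ψ} :=
    Set.image_congr fun ψ _ => rfl
  rw [himg, span_choi_eq hd hr, finrank_Ssub hd hr]

end
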